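/- Let E ⊆ U be a field extension, O a valuation ring of U, and x ∈ U \ E. Then val(x−E) has no maximum if and only if both: (i) val(x−E) ⊆ val(E), and (ii) the residue field of O restricted to E equals the residue field of O restricted to the set of elements xc+d with c ∈ E nonzero and d ∈ E, i.e. res(O ∩ E) = res(O ∩ (xE^{≠0}+E)). -/

import Mathlib

/-- Let `E ⊆ U` be a field extension, `v` the valuation of a valuation
ring `O` of `U` (multiplicative convention: `O = {u | v u ≤ 1}`, maximal ideal
`{u | v u < 1}`; the paper's `val(a) ≤ val(b)` is `v b ≤ v a`), and `x ∈ U \ E`.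
Then `val (x - E)` has no maximum iff
(i) `val (x - E) ⊆ val E`, and (ii) `res (O ∩ E) = res (O ∩ (x E^{≠0} + E))`
(stated as mutual inclusion of residues, where two elements of `O` have the same
residue iff their difference lies in the maximal ideal). -/
theorem stmt1 {U Γ : Type*} [Field U] [LinearOrderedCommGroupWithZero Γ]
    (v : Valuation U Γ) (E : Subfield U) (x : U) (hx : x ∉ E) :
    (¬ ∃ c ∈ E, ∀ d ∈ E, v (x - c) ≤ v (x - d)) ↔
      ((∀ c ∈ E, ∃ e ∈ E, v (x - c) = v e) ∧
        (∀ c ∈ E, ∀ d ∈ E, c ≠ 0 → v (x * c + d) ≤ 1 →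
          ∃ e ∈ E, v e ≤ 1 ∧ v (x * c + d - e) < 1) ∧
        (∀ e ∈ E, v e ≤ 1 →
          ∃ c ∈ E, ∃ d ∈ E, c ≠ 0 ∧ v (x * c + d) ≤ 1 ∧ v (x * c + d - e) < 1)) := by
  have hvne : ∀ c ∈ E, v (x - c) ≠ 0 := by
    intro c hc h
    rw [Valuation.zero_iff, sub_eq_zero] at h
    exact hx (h ▸ hc)
  have hmul : ∀ a b g : Γ, g ≠ 0 → a < b → a * g < b * g := by
    intro a b g hg hab
    rw [mul_comm a, mul_comm b]
    exact mul_lt_mul_of_pos_left hab (zero_lt_iff.mpr hg)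
  constructor
  · intro hnomax
    have hlt : ∀ c ∈ E, ∃ d ∈ E, v (x - d) < v (x - c) := by
      intro c hc
      by_contra h
      push_neg at h
      exact hnomax ⟨c, hc, fun d hd => h d hd⟩
    have hi : ∀ c ∈ E, ∃ e ∈ E, v (x - c) = v e := by
      intro c hc
      obtain ⟨d, hd, hlt'⟩ := hlt c hc
      refine ⟨d - c, E.sub_mem hd hc, ?_⟩
      have hxc : x - c = (x - d) + (d - c) := by ring
      have hdc : v (d - c) = v (x - c) := by
        have : d - c = (x - c) - (x - d) := by ring
        rw [this, Valuation.map_sub_eq_of_lt_left _ hlt']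
      rw [hdc]
    refine ⟨hi, ?_, ?_⟩
    · intro c hc d hd hc0 hle
      set c' : U := -d / c with hc'def
      have hc' : c' ∈ E := E.div_mem (E.neg_mem hd) hc
      obtain ⟨d', hd', hlt'⟩ := hlt c' hc'
      have key : x * c + d = (x - c') * c := by
        rw [hc'def]; field_simp; ring
      have hvc : v c ≠ 0 := by simpa [Valuation.zero_iff] using hc0
      refine ⟨(d' - c') * c, E.mul_mem (E.sub_mem hd' hc') hc, ?_, ?_⟩
      · have h1 : v (d' - c') ≤ v (x - c') := by
          have : d' - c' = (x - c') - (x - d') := by ring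
          rw [this, Valuation.map_sub_eq_of_lt_left _ hlt']
        calc v ((d' - c') * c) = v (d' - c') * v c := v.map_mul _ _
          _ ≤ v (x - c') * v c := mul_le_mul_left h1 _
          _ = v (x * c + d) := by rw [key, v.map_mul]
          _ ≤ 1 := hle
      · have heq : x * c + d - (d' - c') * c = (x - d') * c := by
          rw [key]; ring
        rw [heq, v.map_mul]
        calc v (x - d') * v c < v (x - c') * v c := hmul _ _ _ hvc hlt'
          _ = v (x * c + d) := by rw [key, v.map_mul]
          _ ≤ 1 := hle
    · intro e he hve
      obtain ⟨e', he', hve'⟩ := hi 0 E.zero_mem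
      obtain ⟨d'', hd'', hlt''⟩ := hlt 0 E.zero_mem
      have hx0 : v (x - 0) ≠ 0 := hvne 0 E.zero_mem
      have he'0 : v e' ≠ 0 := hve' ▸ hx0
      have he'ne : e' ≠ 0 := by simpa [Valuation.zero_iff] using he'0
      refine ⟨e'⁻¹, E.inv_mem he', e - e'⁻¹ * d'',
        E.sub_mem he (E.mul_mem (E.inv_mem he') hd''), inv_ne_zero he'ne, ?_, ?_⟩
      · have heq : x * e'⁻¹ + (e - e'⁻¹ * d'') = e'⁻¹ * (x - d'') + e := by ring
        have hsmall : v (e'⁻¹ * (x - d'')) < 1 := by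
          rw [v.map_mul, map_inv₀]
          have : (v e')⁻¹ * v (x - d'') < (v e')⁻¹ * v e' :=
            mul_lt_mul_of_pos_left (hve' ▸ hlt'') (zero_lt_iff.mpr (inv_ne_zero he'0))
          rwa [inv_mul_cancel₀ he'0] at this
        rw [heq]
        exact le_trans (v.map_add _ _) (max_le hsmall.le hve)
      · have heq : x * e'⁻¹ + (e - e'⁻¹ * d'') - e = e'⁻¹ * (x - d'') := by ring
        rw [heq, v.map_mul, map_inv₀]
        have : (v e')⁻¹ * v (x - d'') < (v e')⁻¹ * v e' :=
          mul_lt_mul_of_pos_left (hve' ▸ hlt'') (zero_lt_iff.mpr (inv_ne_zero he'0))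
        rwa [inv_mul_cancel₀ he'0] at this
  · rintro ⟨hi, hii, -⟩ ⟨c, hc, hmin⟩
    obtain ⟨e, he, hve⟩ := hi c hc
    have ha0 : v (x - c) ≠ 0 := hvne c hc
    have hve0 : v e ≠ 0 := hve ▸ ha0
    have he0 : e ≠ 0 := by simpa [Valuation.zero_iff] using hve0
    have h1 : v (x * e⁻¹ + -c * e⁻¹) ≤ 1 := by
      have heq : x * e⁻¹ + -c * e⁻¹ = (x - c) * e⁻¹ := by ring
      rw [heq, v.map_mul, map_inv₀, hve, mul_inv_cancel₀ hve0]
    obtain ⟨e₂, he₂, hve₂, hlt₂⟩ := hii e⁻¹ (E.inv_mem he)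
      (-c * e⁻¹) (E.mul_mem (E.neg_mem hc) (E.inv_mem he)) (inv_ne_zero he0) h1
    have hmem : c + e₂ * e ∈ E := E.add_mem hc (E.mul_mem he₂ he)
    have heq : x - (c + e₂ * e) = (x * e⁻¹ + -c * e⁻¹ - e₂) * e := by
      field_simp
      ring
    have hlt3 : v (x - (c + e₂ * e)) < v (x - c) := by
      rw [heq, v.map_mul, hve]
      calc v (x * e⁻¹ + -c * e⁻¹ - e₂) * v e < 1 * v e := hmul _ _ _ hve0 hlt₂
        _ = v e := one_mul _
    exact absurd (hmin _ hmem) (not_le.mpr hlt3)
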